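/- Let q be a prime power and Q1, Q2, Q3, Q4 points of the canonical subgeometry Σ ≅ PG(4,q) of PG(4,q^5) spanning a 3-space, with coordinates in F_q^5. Let γ, γ' ∈ F_{q^5} \ F_q with γ' = (aγ+b)/(cγ+d) for some a,b,c,d ∈ F_q, ad − bc ≠ 0. Then the line joining P1 = ⟨Q1 + γQ2⟩ and P2 = ⟨Q3 + γ'Q4⟩ contains at least q+1 rank-2 points, namely P2 together with the q points ⟨(Q1 + μ(dQ3 + bQ4)) + γ(Q2 + μ(cQ3 + aQ4))⟩ for μ ∈ F_q, and these points form an F_q-subline. -/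

import Mathlib

/-- Coordinatewise inclusion of `F_q`-vectors into `F_{q⁵}`-vectors. -/
def toK (F K : Type*) [Field F] [Field K] [Algebra F K] (w : Fin 5 → F) : Fin 5 → K :=
  fun i => algebraMap F K (w i)

/-- The canonical subgeometry `Σ ≅ PG(4,q)` of `PG(4,q⁵)`. -/
def sigmaSet (F K : Type*) [Field F] [Field K] [Algebra F K] :
    Set (Projectivization K (Fin 5 → K)) :=
  {P | ∃ (w : Fin 5 → F) (c : K), P.rep = c • toK F K w}

/-- The set `Ω₂` of rank-2 points. -/
def omega2Set (F K : Type*) [Field F] [Field K] [Algebra F K] :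
    Set (Projectivization K (Fin 5 → K)) :=
  {P | P ∉ sigmaSet F K ∧ ∃ Q1 Q2 : Projectivization K (Fin 5 → K),
    Q1 ∈ sigmaSet F K ∧ Q2 ∈ sigmaSet F K ∧ Q1 ≠ Q2 ∧
    P.rep ∈ Submodule.span K ({Q1.rep, Q2.rep} : Set (Fin 5 → K))}

/-- A set of points of `PG(4,q⁵)` is an `F_q`-subline if it consists of the points
`⟨s•w1 + t•w2⟩` with `(s,t) ∈ F_q² \ {0}` for some `K`-independent `w1, w2`. -/
def isSubline (F K : Type*) [Field F] [Field K] [Algebra F K]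
    (S : Set (Projectivization K (Fin 5 → K))) : Prop :=
  ∃ w1 w2 : Fin 5 → K, LinearIndependent K ![w1, w2] ∧
    S = {P | ∃ (v : Fin 5 → K) (hv : v ≠ 0), P = Projectivization.mk K v hv ∧
      ∃ s t : F, v = algebraMap F K s • w1 + algebraMap F K t • w2}

section Aux
variable {F K : Type*} [Field F] [Field K] [Algebra F K]

lemma comb_eq {E1 E2 E3 E4 : Fin 5 → K}
    (hind : LinearIndependent K ![E1, E2, E3, E4])
    {x0 x1 x2 x3 y0 y1 y2 y3 : K}
    (h : x0 • E1 + x1 • E2 + x2 • E3 + x3 • E4 = y0 • E1 + y1 • E2 + y2 • E3 + y3 • E4) :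
    x0 = y0 ∧ x1 = y1 ∧ x2 = y2 ∧ x3 = y3 := by
  rw [Fintype.linearIndependent_iff] at hind
  have h0 : ∑ j : Fin 4, (![x0 - y0, x1 - y1, x2 - y2, x3 - y3] j) • (![E1, E2, E3, E4] j) = 0 := by
    simp only [Fin.sum_univ_four, Matrix.cons_val_zero, Matrix.cons_val_one, Matrix.head_cons,
      Matrix.cons_val_two, Matrix.tail_cons, Matrix.cons_val_three]
    linear_combination (norm := module) h
  have := hind _ h0
  refine ⟨?_, ?_, ?_, ?_⟩
  · have := this 0; simpa [sub_eq_zero] using this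
  · have := this 1; simpa [sub_eq_zero] using this
  · have := this 2; simpa [sub_eq_zero] using this
  · have := this 3; simpa [sub_eq_zero] using this

lemma not_sigma_vec (A B : Fin 5 → F) (γ : K)
    (hγ : γ ∉ Set.range (algebraMap F K))
    (hB : toK F K B ≠ 0)
    (hAB : ∀ k : K, toK F K A ≠ k • toK F K B)
    (c : K) (w : Fin 5 → F) :
    toK F K A + γ • toK F K B ≠ c • toK F K w := by
  intro heq
  obtain ⟨i0, hi0⟩ : ∃ i, B i ≠ 0 := by
    by_contra hall
    push_neg at hall
    exact hB (funext fun i => by simp [toK, hall i])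
  have hco : ∀ i, algebraMap F K (A i) + γ * algebraMap F K (B i)
      = c * algebraMap F K (w i) := fun i => by
    have := congrFun heq i
    simpa [toK, Pi.add_apply, Pi.smul_apply, smul_eq_mul] using this
  by_cases hc : c = 0
  · have h1 := hco i0
    rw [hc, zero_mul] at h1
    have hBi : algebraMap F K (B i0) ≠ 0 := fun h =>
      hi0 ((algebraMap F K).injective (by simpa using h))
    apply hγ
    refine ⟨-(A i0) / (B i0), ?_⟩
    have : γ = -(algebraMap F K (A i0)) / algebraMap F K (B i0) := by
      field_simp
      linear_combination h1
    rw [this, map_div₀, map_neg]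
  · by_cases hpar : ∀ i j, B i * w j = B j * w i
    · set f : F := w i0 / B i0 with hf
      have hwB : ∀ j, w j = f * B j := fun j => by
        rw [hf, div_mul_eq_mul_div, eq_div_iff hi0]
        linear_combination hpar i0 j
      have hkey : ∀ i, algebraMap F K (A i)
          = (c * algebraMap F K f - γ) * algebraMap F K (B i) := by
        intro i
        have := hco i
        rw [hwB i, map_mul] at this
        linear_combination this
      exact hAB (c * algebraMap F K f - γ) (funext fun i => by
        simpa [toK, Pi.smul_apply, smul_eq_mul] using hkey i)
    · push_neg at hpar
      obtain ⟨i, j, hij⟩ := hpar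
      have hBij : algebraMap F K (B i * w j - B j * w i) ≠ 0 := fun h =>
        hij (sub_eq_zero.mp ((algebraMap F K).injective (by simpa using h)))
      apply hγ
      refine ⟨(A j * w i - A i * w j) / (B i * w j - B j * w i), ?_⟩
      rw [map_div₀, div_eq_iff hBij, map_sub, map_sub, map_mul, map_mul, map_mul, map_mul]
      have hi := hco i
      have hj := hco j
      have h2 : (algebraMap F K (A i) + γ * algebraMap F K (B i)) * algebraMap F K (w j)
          = (algebraMap F K (A j) + γ * algebraMap F K (B j)) * algebraMap F K (w i) := by
        rw [hi, hj]; ring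
      linear_combination -h2
end Aux

/-- With `Q1,…,Q4 ∈ Σ` spanning a `3`-space, `γ' = (aγ+b)/(cγ+d)` with
`ad-bc ≠ 0`, the line through `P1 = ⟨Q1+γQ2⟩` and `P2 = ⟨Q3+γ'Q4⟩` contains at least
`q+1` rank-2 points: `P2` together with the `q` points
`⟨(Q1 + μ(dQ3+bQ4)) + γ(Q2 + μ(cQ3+aQ4))⟩`, `μ ∈ F_q`, and they form an `F_q`-subline. -/
theorem stmt_10 {q : ℕ} (hq : IsPrimePow q) (F K : Type*) [Field F] [Fintype F]
    [Field K] [Algebra F K] (hF : Fintype.card F = q) (hK : Module.finrank F K = 5)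
    (Q1 Q2 Q3 Q4 : Fin 5 → F)
    (hspan : Module.finrank K (Submodule.span K
      ({toK F K Q1, toK F K Q2, toK F K Q3, toK F K Q4} : Set (Fin 5 → K))) = 4)
    (γ γ' : K) (hγ : γ ∉ Set.range (algebraMap F K)) (hγ' : γ' ∉ Set.range (algebraMap F K))
    (a b c d : F) (hdet : a * d - b * c ≠ 0)
    (hγ'eq : γ' = (algebraMap F K a * γ + algebraMap F K b) /
      (algebraMap F K c * γ + algebraMap F K d)) :
    Nat.card {P : Projectivization K (Fin 5 → K) |
        ∃ (v : Fin 5 → K) (hv : v ≠ 0), P = Projectivization.mk K v hv ∧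
          (v = toK F K Q3 + γ' • toK F K Q4 ∨
            ∃ μ : F, v = (toK F K Q1 +
                algebraMap F K μ • (algebraMap F K d • toK F K Q3 +
                  algebraMap F K b • toK F K Q4)) +
              γ • (toK F K Q2 + algebraMap F K μ • (algebraMap F K c • toK F K Q3 +
                  algebraMap F K a • toK F K Q4)))} = q + 1 ∧
    {P : Projectivization K (Fin 5 → K) |
        ∃ (v : Fin 5 → K) (hv : v ≠ 0), P = Projectivization.mk K v hv ∧
          (v = toK F K Q3 + γ' • toK F K Q4 ∨
            ∃ μ : F, v = (toK F K Q1 +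
                algebraMap F K μ • (algebraMap F K d • toK F K Q3 +
                  algebraMap F K b • toK F K Q4)) +
              γ • (toK F K Q2 + algebraMap F K μ • (algebraMap F K c • toK F K Q3 +
                  algebraMap F K a • toK F K Q4)))} ⊆ omega2Set F K ∧
    (∀ P ∈ {P : Projectivization K (Fin 5 → K) |
        ∃ (v : Fin 5 → K) (hv : v ≠ 0), P = Projectivization.mk K v hv ∧
          (v = toK F K Q3 + γ' • toK F K Q4 ∨
            ∃ μ : F, v = (toK F K Q1 +
                algebraMap F K μ • (algebraMap F K d • toK F K Q3 +
                  algebraMap F K b • toK F K Q4)) +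
              γ • (toK F K Q2 + algebraMap F K μ • (algebraMap F K c • toK F K Q3 +
                  algebraMap F K a • toK F K Q4)))},
      P.rep ∈ Submodule.span K ({toK F K Q1 + γ • toK F K Q2,
        toK F K Q3 + γ' • toK F K Q4} : Set (Fin 5 → K))) ∧
    isSubline F K {P : Projectivization K (Fin 5 → K) |
        ∃ (v : Fin 5 → K) (hv : v ≠ 0), P = Projectivization.mk K v hv ∧
          (v = toK F K Q3 + γ' • toK F K Q4 ∨
            ∃ μ : F, v = (toK F K Q1 +
                algebraMap F K μ • (algebraMap F K d • toK F K Q3 +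
                  algebraMap F K b • toK F K Q4)) +
              γ • (toK F K Q2 + algebraMap F K μ • (algebraMap F K c • toK F K Q3 +
                  algebraMap F K a • toK F K Q4)))} := by
  classical
  have hinj : Function.Injective (algebraMap F K) := (algebraMap F K).injective
  -- linear independence of the four vectors
  have hind : LinearIndependent K ![toK F K Q1, toK F K Q2, toK F K Q3, toK F K Q4] := by
    rw [linearIndependent_iff_card_eq_finrank_span]
    have hr : Set.range ![toK F K Q1, toK F K Q2, toK F K Q3, toK F K Q4]
        = ({toK F K Q1, toK F K Q2, toK F K Q3, toK F K Q4} : Set (Fin 5 → K)) := by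
      ext x
      simp [Fin.exists_fin_succ, Matrix.range_cons, Matrix.range_empty]
      tauto
    rw [Set.finrank, hr, hspan]
    simp
  have key : ∀ x0 x1 x2 x3 y0 y1 y2 y3 : K,
      x0 • toK F K Q1 + x1 • toK F K Q2 + x2 • toK F K Q3 + x3 • toK F K Q4 =
      y0 • toK F K Q1 + y1 • toK F K Q2 + y2 • toK F K Q3 + y3 • toK F K Q4 →
      x0 = y0 ∧ x1 = y1 ∧ x2 = y2 ∧ x3 = y3 := fun _ _ _ _ _ _ _ _ h => comb_eq hind h
  -- δ and ε
  set δ : K := algebraMap F K c * γ + algebraMap F K d with hδdef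
  set ε : K := algebraMap F K a * γ + algebraMap F K b with hεdef
  have hδ : δ ≠ 0 := by
    intro h
    by_cases hc : c = 0
    · have hd : d = 0 := by
        apply hinj
        rw [map_zero]
        rw [hδdef, hc, map_zero, zero_mul, zero_add] at h
        exact h
      exact hdet (by rw [hc, hd]; ring)
    · apply hγ
      refine ⟨-d / c, ?_⟩
      have hcK : algebraMap F K c ≠ 0 := fun h' => hc (hinj (by simpa using h'))
      rw [map_div₀, map_neg, div_eq_iff hcK]
      rw [hδdef] at h
      linear_combination -h
  have hγ'δ : δ * γ' = ε := by
    rw [hγ'eq]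
    field_simp
  -- nonvanishing facts
  have hV2ne : (toK F K Q3 + γ' • toK F K Q4) ≠ (0 : Fin 5 → K) := by
    intro h
    have := (key 0 0 1 γ' 0 0 0 0 (by linear_combination (norm := module) h)).2.2.1
    exact one_ne_zero this
  have hne : ∀ μ : F, (toK F K Q1 + γ • toK F K Q2) + algebraMap F K μ • (δ • toK F K Q3 + ε • toK F K Q4) ≠ (0 : Fin 5 → K) := by
    intro μ h
    have := (key 1 γ (algebraMap F K μ * δ) (algebraMap F K μ * ε) 0 0 0 0
      (by linear_combination (norm := module) h)).1
    exact one_ne_zero this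
  have hQ3ne : toK F K Q3 ≠ (0 : Fin 5 → K) := by
    intro h
    have := (key 0 0 1 0 0 0 0 0 (by linear_combination (norm := module) h)).2.2.1
    exact one_ne_zero this
  have hQ4ne : toK F K Q4 ≠ (0 : Fin 5 → K) := by
    intro h
    have := (key 0 0 0 1 0 0 0 0 (by linear_combination (norm := module) h)).2.2.2
    exact one_ne_zero this
  have hw2ne : (δ • toK F K Q3 + ε • toK F K Q4) ≠ (0 : Fin 5 → K) := by
    intro h
    have := (key 0 0 δ ε 0 0 0 0 (by linear_combination (norm := module) h)).2.2.1
    exact hδ this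
  have hAB34 : ∀ k : K, toK F K Q3 ≠ k • toK F K Q4 := by
    intro k h
    have := (key 0 0 1 0 0 0 0 k (by linear_combination (norm := module) h)).2.2.1
    exact one_ne_zero this
  have hw2V2 : (δ • toK F K Q3 + ε • toK F K Q4) = δ • (toK F K Q3 + γ' • toK F K Q4) := by
    rw [smul_add, smul_smul, hγ'δ]
  have hvmu : ∀ μ : F, ((toK F K Q1 + algebraMap F K μ • (algebraMap F K d • toK F K Q3 + algebraMap F K b • toK F K Q4)) + γ • (toK F K Q2 + algebraMap F K μ • (algebraMap F K c • toK F K Q3 + algebraMap F K a • toK F K Q4))) = (toK F K Q1 + γ • toK F K Q2) + algebraMap F K μ • (δ • toK F K Q3 + ε • toK F K Q4) := by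
    intro μ
    rw [hδdef, hεdef]
    module
  have htA : ∀ μ : F, toK F K (Q1 + μ • (d • Q3 + b • Q4))
      = toK F K Q1 + algebraMap F K μ • (algebraMap F K d • toK F K Q3 + algebraMap F K b • toK F K Q4) := by
    intro μ
    funext i
    simp only [toK, Pi.add_apply, Pi.smul_apply, smul_eq_mul, map_add, map_mul, mul_add]
  have htB : ∀ μ : F, toK F K (Q2 + μ • (c • Q3 + a • Q4))
      = toK F K Q2 + algebraMap F K μ • (algebraMap F K c • toK F K Q3 + algebraMap F K a • toK F K Q4) := by
    intro μ
    funext i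
    simp only [toK, Pi.add_apply, Pi.smul_apply, smul_eq_mul, map_add, map_mul, mul_add]
  have hAne : ∀ μ : F, toK F K (Q1 + μ • (d • Q3 + b • Q4)) ≠ (0 : Fin 5 → K) := by
    intro μ h
    rw [htA μ] at h
    have := (key 1 0 (algebraMap F K μ * algebraMap F K d) (algebraMap F K μ * algebraMap F K b) 0 0 0 0
      (by linear_combination (norm := module) h)).1
    exact one_ne_zero this
  have hBne : ∀ μ : F, toK F K (Q2 + μ • (c • Q3 + a • Q4)) ≠ (0 : Fin 5 → K) := by
    intro μ h
    rw [htB μ] at h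
    have := (key 0 1 (algebraMap F K μ * algebraMap F K c) (algebraMap F K μ * algebraMap F K a) 0 0 0 0
      (by linear_combination (norm := module) h)).2.1
    exact one_ne_zero this
  have hABμ : ∀ (μ : F) (k : K), toK F K (Q1 + μ • (d • Q3 + b • Q4)) ≠ k • toK F K (Q2 + μ • (c • Q3 + a • Q4)) := by
    intro μ k h
    rw [htA μ, htB μ] at h
    have := (key 1 0 (algebraMap F K μ * algebraMap F K d) (algebraMap F K μ * algebraMap F K b)
      0 k (k * (algebraMap F K μ * algebraMap F K c)) (k * (algebraMap F K μ * algebraMap F K a))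
      (by linear_combination (norm := module) h)).1
    exact one_ne_zero this
  have hsigma : ∀ (w : Fin 5 → F) (hw : toK F K w ≠ 0),
      Projectivization.mk K (toK F K w) hw ∈ sigmaSet F K := by
    intro w hw
    obtain ⟨u, hu⟩ := Projectivization.exists_smul_eq_mk_rep K (toK F K w) hw
    exact ⟨w, (u : K), by rw [← hu, Units.smul_def]⟩
  have mkc : ∀ (v v' : Fin 5 → K) (hv : v ≠ 0) (hv' : v' ≠ 0), v = v' →
      Projectivization.mk K v hv = Projectivization.mk K v' hv' := by
    intro v v' hv hv' h
    subst h
    rfl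
  -- description of the set
  have hSdesc : {P : Projectivization K (Fin 5 → K) |
      ∃ (v : Fin 5 → K) (hv : v ≠ 0), P = Projectivization.mk K v hv ∧
        (v = toK F K Q3 + γ' • toK F K Q4 ∨
          ∃ μ : F, v = (toK F K Q1 +
              algebraMap F K μ • (algebraMap F K d • toK F K Q3 + algebraMap F K b • toK F K Q4)) +
            γ • (toK F K Q2 + algebraMap F K μ • (algebraMap F K c • toK F K Q3 + algebraMap F K a • toK F K Q4)))}
      = {P : Projectivization K (Fin 5 → K) |
          P = Projectivization.mk K (toK F K Q3 + γ' • toK F K Q4) hV2ne ∨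
          ∃ μ : F, P = Projectivization.mk K ((toK F K Q1 + γ • toK F K Q2) + algebraMap F K μ • (δ • toK F K Q3 + ε • toK F K Q4)) (hne μ)} := by
    ext P
    simp only [Set.mem_setOf_eq]
    constructor
    · rintro ⟨v, hv, rfl, (rfl | ⟨μ, rfl⟩)⟩
      · exact Or.inl (mkc _ _ _ _ rfl)
      · exact Or.inr ⟨μ, mkc _ _ _ _ (hvmu μ)⟩
    · rintro (rfl | ⟨μ, rfl⟩)
      · exact ⟨(toK F K Q3 + γ' • toK F K Q4), hV2ne, rfl, Or.inl rfl⟩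
      · exact ⟨((toK F K Q1 + algebraMap F K μ • (algebraMap F K d • toK F K Q3 + algebraMap F K b • toK F K Q4)) + γ • (toK F K Q2 + algebraMap F K μ • (algebraMap F K c • toK F K Q3 + algebraMap F K a • toK F K Q4))), by rw [hvmu μ]; exact hne μ,
          (mkc _ _ _ _ (hvmu μ)).symm, Or.inr ⟨μ, rfl⟩⟩
  rw [hSdesc]
  refine ⟨?_, ?_, ?_, ?_⟩
  · -- cardinality
    have hginj : Function.Injective (fun o : Option F => Option.elim o
        (Projectivization.mk K (toK F K Q3 + γ' • toK F K Q4) hV2ne)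
        (fun μ => Projectivization.mk K ((toK F K Q1 + γ • toK F K Q2) + algebraMap F K μ • (δ • toK F K Q3 + ε • toK F K Q4)) (hne μ))) := by
      intro o1 o2 h
      cases o1 with
      | none => cases o2 with
        | none => rfl
        | some μ =>
          exfalso
          simp only [Option.elim] at h
          rw [Projectivization.mk_eq_mk_iff] at h
          obtain ⟨u, hu⟩ := h
          have hu' : (u : K) • ((toK F K Q1 + γ • toK F K Q2) + algebraMap F K μ • (δ • toK F K Q3 + ε • toK F K Q4)) = (toK F K Q3 + γ' • toK F K Q4) := by
            simpa [Units.smul_def] using hu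
          have := (key (u : K) ((u : K) * γ) ((u : K) * (algebraMap F K μ * δ)) ((u : K) * (algebraMap F K μ * ε))
            0 0 1 γ' (by linear_combination (norm := module) hu')).1
          exact u.ne_zero this
      | some μ => cases o2 with
        | none =>
          exfalso
          simp only [Option.elim] at h
          rw [Projectivization.mk_eq_mk_iff] at h
          obtain ⟨u, hu⟩ := h
          have hu' : (u : K) • (toK F K Q3 + γ' • toK F K Q4) = (toK F K Q1 + γ • toK F K Q2) + algebraMap F K μ • (δ • toK F K Q3 + ε • toK F K Q4) := by
            simpa [Units.smul_def] using hu
          have := (key 0 0 (u : K) ((u : K) * γ') 1 γ (algebraMap F K μ * δ) (algebraMap F K μ * ε)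
            (by linear_combination (norm := module) hu')).1
          exact one_ne_zero this.symm
        | some μ' =>
          simp only [Option.elim] at h
          rw [Projectivization.mk_eq_mk_iff] at h
          obtain ⟨u, hu⟩ := h
          have hu' : (u : K) • ((toK F K Q1 + γ • toK F K Q2) + algebraMap F K μ' • (δ • toK F K Q3 + ε • toK F K Q4)) = (toK F K Q1 + γ • toK F K Q2) + algebraMap F K μ • (δ • toK F K Q3 + ε • toK F K Q4) := by
            simpa [Units.smul_def] using hu
          obtain ⟨h1, -, h3, -⟩ := key (u : K) ((u : K) * γ) ((u : K) * (algebraMap F K μ' * δ))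
            ((u : K) * (algebraMap F K μ' * ε)) 1 γ (algebraMap F K μ * δ) (algebraMap F K μ * ε)
            (by linear_combination (norm := module) hu')
          rw [h1, one_mul] at h3
          have h4 : algebraMap F K μ' * δ = algebraMap F K μ * δ := h3
          have : μ' = μ := hinj (mul_right_cancel₀ hδ h4)
          rw [this]
    have hrange : {P : Projectivization K (Fin 5 → K) |
          P = Projectivization.mk K (toK F K Q3 + γ' • toK F K Q4) hV2ne ∨
          ∃ μ : F, P = Projectivization.mk K ((toK F K Q1 + γ • toK F K Q2) + algebraMap F K μ • (δ • toK F K Q3 + ε • toK F K Q4)) (hne μ)}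
        = Set.range (fun o : Option F => Option.elim o
            (Projectivization.mk K (toK F K Q3 + γ' • toK F K Q4) hV2ne)
            (fun μ => Projectivization.mk K ((toK F K Q1 + γ • toK F K Q2) + algebraMap F K μ • (δ • toK F K Q3 + ε • toK F K Q4)) (hne μ))) := by
      ext P
      simp only [Set.mem_setOf_eq, Set.mem_range, Option.exists, Option.elim]
      constructor
      · rintro (h | ⟨μ, h⟩)
        · exact Or.inl h.symm
        · exact Or.inr ⟨μ, h.symm⟩
      · rintro (h | ⟨μ, h⟩)
        · exact Or.inl h.symm
        · exact Or.inr ⟨μ, h.symm⟩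
    rw [hrange, Nat.card_range_of_injective hginj, Nat.card_eq_fintype_card,
      Fintype.card_option, hF]
  · -- subset of omega2
    rintro P (rfl | ⟨μ, rfl⟩)
    · obtain ⟨u, hu⟩ := Projectivization.exists_smul_eq_mk_rep K (toK F K Q3 + γ' • toK F K Q4) hV2ne
      have h2 : (u : K) • (toK F K Q3 + γ' • toK F K Q4)
          = (Projectivization.mk K (toK F K Q3 + γ' • toK F K Q4) hV2ne).rep := by
        rw [← hu, Units.smul_def]
      refine ⟨?_, Projectivization.mk K (toK F K Q3) hQ3ne,
        Projectivization.mk K (toK F K Q4) hQ4ne,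
        hsigma Q3 hQ3ne, hsigma Q4 hQ4ne, ?_, ?_⟩
      · rintro ⟨w, cc, hPrep⟩
        have h3 : (toK F K Q3 + γ' • toK F K Q4) = ((u : K)⁻¹ * cc) • toK F K w := by
          have h5 : (toK F K Q3 + γ' • toK F K Q4) = (u : K)⁻¹ • ((u : K) • (toK F K Q3 + γ' • toK F K Q4)) :=
            (inv_smul_smul₀ u.ne_zero _).symm
          rw [h5, h2, hPrep, smul_smul]
        exact not_sigma_vec Q3 Q4 γ' hγ' hQ4ne hAB34 ((u : K)⁻¹ * cc) w h3
      · intro h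
        rw [Projectivization.mk_eq_mk_iff] at h
        obtain ⟨u', hu'⟩ := h
        have hu'' : (u' : K) • toK F K Q4 = toK F K Q3 := by
          simpa [Units.smul_def] using hu'
        exact hAB34 (u' : K) hu''.symm
      · obtain ⟨u3, hu3⟩ := Projectivization.exists_smul_eq_mk_rep K (toK F K Q3) hQ3ne
        obtain ⟨u4, hu4⟩ := Projectivization.exists_smul_eq_mk_rep K (toK F K Q4) hQ4ne
        rw [Submodule.mem_span_pair]
        refine ⟨(u : K) * (u3 : K)⁻¹, (u : K) * γ' * (u4 : K)⁻¹, ?_⟩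
        rw [← h2, ← hu3, ← hu4]
        simp only [Units.smul_def]
        match_scalars <;> field_simp
    · obtain ⟨u, hu⟩ := Projectivization.exists_smul_eq_mk_rep K
        ((toK F K Q1 + γ • toK F K Q2) + algebraMap F K μ • (δ • toK F K Q3 + ε • toK F K Q4)) (hne μ)
      have h2 : (u : K) • ((toK F K Q1 + γ • toK F K Q2) + algebraMap F K μ • (δ • toK F K Q3 + ε • toK F K Q4))
          = (Projectivization.mk K ((toK F K Q1 + γ • toK F K Q2) + algebraMap F K μ • (δ • toK F K Q3 + ε • toK F K Q4)) (hne μ)).rep := by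
        rw [← hu, Units.smul_def]
      refine ⟨?_, Projectivization.mk K (toK F K (Q1 + μ • (d • Q3 + b • Q4))) (hAne μ),
        Projectivization.mk K (toK F K (Q2 + μ • (c • Q3 + a • Q4))) (hBne μ),
        hsigma _ (hAne μ), hsigma _ (hBne μ), ?_, ?_⟩
      · rintro ⟨w, cc, hPrep⟩
        have h3 : toK F K (Q1 + μ • (d • Q3 + b • Q4)) + γ • toK F K (Q2 + μ • (c • Q3 + a • Q4)) = ((u : K)⁻¹ * cc) • toK F K w := by
          have h5 : (toK F K Q1 + γ • toK F K Q2) + algebraMap F K μ • (δ • toK F K Q3 + ε • toK F K Q4)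
              = (u : K)⁻¹ • ((u : K) • ((toK F K Q1 + γ • toK F K Q2) + algebraMap F K μ • (δ • toK F K Q3 + ε • toK F K Q4))) :=
            (inv_smul_smul₀ u.ne_zero _).symm
          rw [htA μ, htB μ, hvmu μ, h5, h2, hPrep, smul_smul]
        exact not_sigma_vec (Q1 + μ • (d • Q3 + b • Q4)) (Q2 + μ • (c • Q3 + a • Q4)) γ hγ (hBne μ) (hABμ μ) ((u : K)⁻¹ * cc) w h3
      · intro h
        rw [Projectivization.mk_eq_mk_iff] at h
        obtain ⟨u', hu'⟩ := h
        have hu'' : (u' : K) • toK F K (Q2 + μ • (c • Q3 + a • Q4)) = toK F K (Q1 + μ • (d • Q3 + b • Q4)) := by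
          simpa [Units.smul_def] using hu'
        exact hABμ μ (u' : K) hu''.symm
      · obtain ⟨u3, hu3⟩ := Projectivization.exists_smul_eq_mk_rep K (toK F K (Q1 + μ • (d • Q3 + b • Q4))) (hAne μ)
        obtain ⟨u4, hu4⟩ := Projectivization.exists_smul_eq_mk_rep K (toK F K (Q2 + μ • (c • Q3 + a • Q4))) (hBne μ)
        rw [Submodule.mem_span_pair]
        refine ⟨(u : K) * (u3 : K)⁻¹, (u : K) * γ * (u4 : K)⁻¹, ?_⟩
        rw [← h2, ← hu3, ← hu4, htA μ, htB μ, hδdef, hεdef]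
        simp only [Units.smul_def]
        match_scalars <;> field_simp <;> ring
  · -- line membership
    rintro P (rfl | ⟨μ, rfl⟩)
    · obtain ⟨u, hu⟩ := Projectivization.exists_smul_eq_mk_rep K (toK F K Q3 + γ' • toK F K Q4) hV2ne
      rw [Submodule.mem_span_pair]
      refine ⟨0, (u : K), ?_⟩
      rw [← hu]
      simp [Units.smul_def]
    · obtain ⟨u, hu⟩ := Projectivization.exists_smul_eq_mk_rep K
        ((toK F K Q1 + γ • toK F K Q2) + algebraMap F K μ • (δ • toK F K Q3 + ε • toK F K Q4)) (hne μ)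
      rw [Submodule.mem_span_pair]
      refine ⟨(u : K), (u : K) * (algebraMap F K μ * δ), ?_⟩
      rw [← hu, hw2V2]
      simp only [Units.smul_def]
      module
  · -- subline
    refine ⟨(toK F K Q1 + γ • toK F K Q2), (δ • toK F K Q3 + ε • toK F K Q4), ?_, ?_⟩
    · rw [LinearIndependent.pair_iff]
      intro s t hst
      obtain ⟨h1, -, h3, -⟩ := key s (s * γ) (t * δ) (t * ε) 0 0 0 0
        (by linear_combination (norm := module) hst)
      exact ⟨h1, (mul_eq_zero.mp h3).resolve_right hδ⟩
    · ext P
      simp only [Set.mem_setOf_eq]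
      constructor
      · rintro (rfl | ⟨μ, rfl⟩)
        · refine ⟨(δ • toK F K Q3 + ε • toK F K Q4), hw2ne, ?_, 0, 1, by simp⟩
          rw [Projectivization.mk_eq_mk_iff]
          refine ⟨(Units.mk0 δ hδ)⁻¹, ?_⟩
          rw [Units.smul_def, hw2V2]
          simp only [Units.val_inv_eq_inv_val, Units.val_mk0]
          rw [inv_smul_smul₀ hδ]
        · exact ⟨(toK F K Q1 + γ • toK F K Q2) + algebraMap F K μ • (δ • toK F K Q3 + ε • toK F K Q4), hne μ, rfl, 1, μ, by simp⟩
      · rintro ⟨v, hv, rfl, s, t, rfl⟩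
        by_cases hs : s = 0
        · subst hs
          have ht : t ≠ 0 := by
            intro ht
            subst ht
            exact hv (by simp)
          have htK : algebraMap F K t ≠ 0 := fun h' => ht (hinj (by simpa using h'))
          left
          rw [Projectivization.mk_eq_mk_iff]
          refine ⟨Units.mk0 (algebraMap F K t * δ) (mul_ne_zero htK hδ), ?_⟩
          rw [Units.smul_def, Units.val_mk0, hw2V2]
          module
        · have hsK : algebraMap F K s ≠ 0 := fun h' => hs (hinj (by simpa using h'))
          right
          refine ⟨t / s, ?_⟩
          rw [Projectivization.mk_eq_mk_iff]
          refine ⟨Units.mk0 (algebraMap F K s) hsK, ?_⟩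
          have hst : algebraMap F K s * algebraMap F K (t / s) = algebraMap F K t := by
            rw [← map_mul, mul_comm, div_mul_cancel₀ _ hs]
          rw [Units.smul_def, Units.val_mk0, smul_add, smul_smul, hst]
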